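/- For every p in (1,2] and every real x with |x| ≤ π, one has |sin x|^p ≤ A(p)|cos x|^p − B(p)cos(px), where A(p) = tan^{p−1}(π/(2p))/cot(π/(2p)) and B(p) = sin^{p−1}(π/(2p))/cos(π/(2p)). -/

import Mathlib

set_option maxHeartbeats 1000000

open Real Set

namespace Pichor

noncomputable def Bc (p : ℝ) : ℝ := Real.sin (π / (2 * p)) ^ (p - 1) / Real.cos (π / (2 * p))
noncomputable def Ac (p : ℝ) : ℝ := Real.tan (π / (2 * p)) ^ p

variable {p : ℝ}

lemma t_lb (hp1 : 1 < p) (hp2 : p ≤ 2) : π / 4 ≤ π / (2 * p) := by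
  rw [div_le_div_iff₀ (by norm_num) (by nlinarith)]
  nlinarith [pi_pos]

lemma t_ub (hp1 : 1 < p) : π / (2 * p) < π / 2 := by
  rw [div_lt_div_iff₀ (by nlinarith) (by norm_num)]
  nlinarith [pi_pos]

lemma t_pos (hp1 : 1 < p) : 0 < π / (2 * p) := by
  have := pi_pos; positivity

lemma cos_t_pos (hp1 : 1 < p) : 0 < Real.cos (π / (2 * p)) :=
  Real.cos_pos_of_mem_Ioo ⟨by linarith [t_pos hp1, pi_pos], t_ub hp1⟩

lemma sin_t_pos (hp1 : 1 < p) : 0 < Real.sin (π / (2 * p)) :=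
  Real.sin_pos_of_pos_of_lt_pi (t_pos hp1) (by linarith [t_ub hp1, pi_pos])

lemma tan_t_pos (hp1 : 1 < p) : 0 < Real.tan (π / (2 * p)) := by
  rw [Real.tan_eq_sin_div_cos]; exact div_pos (sin_t_pos hp1) (cos_t_pos hp1)

lemma B_pos (hp1 : 1 < p) : 0 < Bc p :=
  div_pos (Real.rpow_pos_of_pos (sin_t_pos hp1) _) (cos_t_pos hp1)

lemma A_pos (hp1 : 1 < p) : 0 < Ac p := Real.rpow_pos_of_pos (tan_t_pos hp1) _

lemma cos_t_le (hp1 : 1 < p) (hp2 : p ≤ 2) : Real.cos (π / (2 * p)) ≤ √2 / 2 := by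
  rw [← Real.cos_pi_div_four]
  exact Real.cos_le_cos_of_nonneg_of_le_pi (by positivity) (by linarith [t_ub hp1, pi_pos])
    (t_lb hp1 hp2)

lemma sin_t_ge (hp1 : 1 < p) (hp2 : p ≤ 2) : √2 / 2 ≤ Real.sin (π / (2 * p)) := by
  have h : Real.sin (π / (2 * p)) = Real.cos (π / 2 - π / (2 * p)) := by
    rw [Real.cos_pi_div_two_sub]
  rw [h, ← Real.cos_pi_div_four]
  refine Real.cos_le_cos_of_nonneg_of_le_pi (by linarith [t_ub hp1]) (by linarith [pi_pos]) ?_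
  have := t_lb hp1 hp2
  linarith

lemma sqrt2_half_pos : (0:ℝ) < √2 / 2 := by positivity

/-- ψ is antitone on (0, π/2). -/
lemma ratio1 (hp1 : 1 < p) (hp2 : p ≤ 2) :
    AntitoneOn (fun x => (p - 1) * Real.log (Real.sin x) - Real.log (Real.sin ((p - 1) * x)))
      (Ioo 0 (π / 2)) := by
  have hd : ∀ x ∈ Ioo 0 (π / 2),
      HasDerivAt (fun x => (p - 1) * Real.log (Real.sin x) - Real.log (Real.sin ((p - 1) * x)))
        ((p - 1) * (Real.cos x / Real.sin x)
          - Real.cos ((p - 1) * x) * ((p - 1) * 1) / Real.sin ((p - 1) * x)) x := by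
    intro x hx
    have hs : 0 < Real.sin x :=
      Real.sin_pos_of_pos_of_lt_pi hx.1 (by linarith [hx.2, pi_pos])
    have hvx : 0 < (p - 1) * x := by nlinarith [hx.1]
    have hvx2 : (p - 1) * x < π := by nlinarith [hx.1, hx.2, pi_pos]
    have hsv : 0 < Real.sin ((p - 1) * x) := Real.sin_pos_of_pos_of_lt_pi hvx hvx2
    have h1 : HasDerivAt (fun x => Real.log (Real.sin x)) (Real.cos x / Real.sin x) x :=
      (Real.hasDerivAt_sin x).log hs.ne'
    have h2 : HasDerivAt (fun x : ℝ => (p - 1) * x) ((p - 1) * 1) x :=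
      (hasDerivAt_id x).const_mul (p - 1)
    have h3 : HasDerivAt (fun x => Real.sin ((p - 1) * x)) (Real.cos ((p - 1) * x) * ((p - 1) * 1)) x :=
      (Real.hasDerivAt_sin ((p - 1) * x)).comp x h2
    exact (h1.const_mul (p - 1)).sub (h3.log hsv.ne')
  refine antitoneOn_of_deriv_nonpos (convex_Ioo _ _) ?_ ?_ ?_
  · exact fun x hx => ((hd x hx).continuousAt).continuousWithinAt
  · rw [interior_Ioo]
    exact fun x hx => ((hd x hx).differentiableAt).differentiableWithinAt
  · rw [interior_Ioo]
    intro x hx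
    rw [(hd x hx).deriv]
    have hs : 0 < Real.sin x :=
      Real.sin_pos_of_pos_of_lt_pi hx.1 (by linarith [hx.2, pi_pos])
    have hvx : 0 < (p - 1) * x := by nlinarith [hx.1]
    have hvx2 : (p - 1) * x < π := by nlinarith [hx.1, hx.2, pi_pos]
    have hsv : 0 < Real.sin ((p - 1) * x) := Real.sin_pos_of_pos_of_lt_pi hvx hvx2
    have key : (p - 1) * (Real.cos x / Real.sin x)
        - Real.cos ((p - 1) * x) * ((p - 1) * 1) / Real.sin ((p - 1) * x)
        = (p - 1) * Real.sin ((p - 1) * x - x) / (Real.sin x * Real.sin ((p - 1) * x)) := by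
      rw [Real.sin_sub]
      field_simp
    rw [key]
    apply div_nonpos_of_nonpos_of_nonneg _ (by positivity)
    have harg : (p - 1) * x - x = -((2 - p) * x) := by ring
    rw [harg, Real.sin_neg]
    have h2px : 0 ≤ Real.sin ((2 - p) * x) := by
      apply Real.sin_nonneg_of_nonneg_of_le_pi
      · nlinarith [hx.1]
      · nlinarith [hx.1, hx.2, pi_pos]
    nlinarith [hp1]


/-- exp of ψ x is the ratio. -/
lemma exp_psi (hp1 : 1 < p) {x : ℝ} (hx0 : 0 < x) (hx2 : x < π) (hv0 : 0 < (p-1)*x)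
    (hv2 : (p-1)*x < π) :
    Real.exp ((p - 1) * Real.log (Real.sin x) - Real.log (Real.sin ((p - 1) * x)))
      = Real.sin x ^ (p - 1) / Real.sin ((p - 1) * x) := by
  have hs : 0 < Real.sin x := Real.sin_pos_of_pos_of_lt_pi hx0 hx2
  have hsv : 0 < Real.sin ((p - 1) * x) := Real.sin_pos_of_pos_of_lt_pi hv0 hv2
  rw [Real.exp_sub, Real.exp_log hsv, Real.rpow_def_of_pos hs, mul_comm]

lemma psi_t_eq (hp1 : 1 < p) :
    Real.sin (π / (2 * p)) ^ (p - 1) / Real.sin ((p - 1) * (π / (2 * p))) = Bc p := by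
  have h : (p - 1) * (π / (2 * p)) = π / 2 - π / (2 * p) := by
    field_simp
  rw [h, Real.sin_pi_div_two_sub, Bc]

lemma ratio1_le (hp1 : 1 < p) (hp2 : p ≤ 2) {x : ℝ} (hx : x ∈ Ioo 0 (π / 2))
    (hxt : x ≤ π / (2 * p)) :
    Bc p * Real.sin ((p - 1) * x) ≤ Real.sin x ^ (p - 1) := by
  have hπ := pi_pos
  have ht : π / (2 * p) ∈ Ioo 0 (π / 2) := ⟨t_pos hp1, t_ub hp1⟩
  have h := ratio1 hp1 hp2 hx ht hxt
  have h2 := Real.exp_le_exp.2 h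
  rw [exp_psi hp1 hx.1 (by linarith [hx.2]) (by nlinarith [hx.1]) (by nlinarith [hx.1, hx.2]),
    exp_psi hp1 ht.1 (by linarith [ht.2]) (by nlinarith [ht.1]) (by nlinarith [ht.1, ht.2]),
    psi_t_eq hp1] at h2
  have hsv : 0 < Real.sin ((p - 1) * x) :=
    Real.sin_pos_of_pos_of_lt_pi (by nlinarith [hx.1]) (by nlinarith [hx.1, hx.2])
  calc Bc p * Real.sin ((p - 1) * x)
      ≤ Real.sin x ^ (p - 1) / Real.sin ((p - 1) * x) * Real.sin ((p - 1) * x) := by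
        apply mul_le_mul_of_nonneg_right h2 hsv.le
    _ = Real.sin x ^ (p - 1) := div_mul_cancel₀ _ hsv.ne'

lemma ratio1_ge (hp1 : 1 < p) (hp2 : p ≤ 2) {x : ℝ} (hx : x ∈ Ioo 0 (π / 2))
    (hxt : π / (2 * p) ≤ x) :
    Real.sin x ^ (p - 1) ≤ Bc p * Real.sin ((p - 1) * x) := by
  have hπ := pi_pos
  have ht : π / (2 * p) ∈ Ioo 0 (π / 2) := ⟨t_pos hp1, t_ub hp1⟩
  have h := ratio1 hp1 hp2 ht hx hxt
  have h2 := Real.exp_le_exp.2 h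
  rw [exp_psi hp1 hx.1 (by linarith [hx.2]) (by nlinarith [hx.1]) (by nlinarith [hx.1, hx.2]),
    exp_psi hp1 ht.1 (by linarith [ht.2]) (by nlinarith [ht.1]) (by nlinarith [ht.1, ht.2]),
    psi_t_eq hp1] at h2
  have hsv : 0 < Real.sin ((p - 1) * x) :=
    Real.sin_pos_of_pos_of_lt_pi (by nlinarith [hx.1]) (by nlinarith [hx.1, hx.2])
  calc Real.sin x ^ (p - 1)
      = Real.sin x ^ (p - 1) / Real.sin ((p - 1) * x) * Real.sin ((p - 1) * x) :=
        (div_mul_cancel₀ _ hsv.ne').symm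
    _ ≤ Bc p * Real.sin ((p - 1) * x) := mul_le_mul_of_nonneg_right h2 hsv.le


lemma ustar_pos (hp1 : 1 < p) : 0 < π - π / p := by
  have hπ := pi_pos
  have hp0 : (0:ℝ) < p := by linarith
  rw [sub_pos, div_lt_iff₀ hp0]
  nlinarith

lemma ustar_le (hp1 : 1 < p) (hp2 : p ≤ 2) : π - π / p ≤ π / 2 := by
  have hπ := pi_pos
  have hp0 : (0:ℝ) < p := by linarith
  have h : π / 2 ≤ π / p := by
    rw [div_le_div_iff₀ (by norm_num) hp0]
    nlinarith
  linarith

/-- φ is monotone on (0, π - π/p]. -/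
lemma ratio2 (hp1 : 1 < p) (hp2 : p ≤ 2) :
    MonotoneOn (fun u => (p - 1) * Real.log (Real.sin u) - Real.log (Real.sin ((p - 1) * (π - u))))
      (Ioc 0 (π - π / p)) := by
  have hπ := pi_pos
  have hp0 : (0:ℝ) < p := by linarith
  have hbasic : ∀ u ∈ Ioc 0 (π - π / p),
      0 < Real.sin u ∧ 0 < Real.sin ((p - 1) * (π - u)) := by
    intro u hu
    have h1 : u < π := by linarith [hu.2, ustar_le hp1 hp2]
    refine ⟨Real.sin_pos_of_pos_of_lt_pi hu.1 h1, Real.sin_pos_of_pos_of_lt_pi ?_ ?_⟩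
    · have : π / p ≤ π - u := by linarith [hu.2]
      nlinarith [div_pos hπ hp0]
    · have hpu : (p - 1) * (π - u) < (p - 1) * π := by
        apply mul_lt_mul_of_pos_left _ (by linarith)
        linarith [hu.1]
      nlinarith
  have hd : ∀ u ∈ Ioo 0 (π - π / p),
      HasDerivAt (fun u => (p - 1) * Real.log (Real.sin u)
          - Real.log (Real.sin ((p - 1) * (π - u))))
        ((p - 1) * (Real.cos u / Real.sin u)
          - Real.cos ((p - 1) * (π - u)) * ((p - 1) * -1) / Real.sin ((p - 1) * (π - u))) u := by
    intro u hu
    obtain ⟨hs, hsv⟩ := hbasic u ⟨hu.1, hu.2.le⟩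
    have h1 : HasDerivAt (fun u => Real.log (Real.sin u)) (Real.cos u / Real.sin u) u :=
      (Real.hasDerivAt_sin u).log hs.ne'
    have h2 : HasDerivAt (fun u : ℝ => (p - 1) * (π - u)) ((p - 1) * -1) u := by
      simpa using (((hasDerivAt_id u).const_sub π).const_mul (p - 1))
    have h3 : HasDerivAt (fun u => Real.sin ((p - 1) * (π - u)))
        (Real.cos ((p - 1) * (π - u)) * ((p - 1) * -1)) u :=
      by have := (Real.hasDerivAt_sin ((p - 1) * (π - u))).comp u h2; exact this
    exact (h1.const_mul (p - 1)).sub (h3.log hsv.ne')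
  refine monotoneOn_of_deriv_nonneg (convex_Ioc _ _) ?_ ?_ ?_
  · intro u hu
    obtain ⟨hs, hsv⟩ := hbasic u hu
    have c1 : ContinuousAt (fun u => (p - 1) * Real.log (Real.sin u)
        - Real.log (Real.sin ((p - 1) * (π - u)))) u := by
      apply ContinuousAt.sub
      · exact ((Real.continuousAt_log hs.ne').comp Real.continuous_sin.continuousAt).const_mul _
      · have cinner : Continuous fun u : ℝ => Real.sin ((p - 1) * (π - u)) :=
          Real.continuous_sin.comp (continuous_const.mul (continuous_const.sub continuous_id))
        exact ContinuousAt.comp (g := Real.log)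
          (f := fun u : ℝ => Real.sin ((p - 1) * (π - u)))
          (Real.continuousAt_log hsv.ne') cinner.continuousAt
    exact c1.continuousWithinAt
  · rw [interior_Ioc]
    exact fun u hu => ((hd u hu).differentiableAt).differentiableWithinAt
  · rw [interior_Ioc]
    intro u hu
    rw [(hd u hu).deriv]
    obtain ⟨hs, hsv⟩ := hbasic u ⟨hu.1, hu.2.le⟩
    have key : (p - 1) * (Real.cos u / Real.sin u)
        - Real.cos ((p - 1) * (π - u)) * ((p - 1) * -1) / Real.sin ((p - 1) * (π - u))
        = (p - 1) * Real.sin (u + (p - 1) * (π - u))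
            / (Real.sin u * Real.sin ((p - 1) * (π - u))) := by
      rw [Real.sin_add]
      field_simp
      ring
    rw [key]
    apply div_nonneg _ (by positivity)
    have h2px : 0 ≤ Real.sin (u + (p - 1) * (π - u)) := by
      apply Real.sin_nonneg_of_nonneg_of_le_pi
      · have h1 : u < π := by linarith [hu.2, ustar_le hp1 hp2]
        nlinarith [hu.1]
      · have h1 : u ≤ π := by linarith [hu.2, ustar_le hp1 hp2]
        nlinarith
    nlinarith [hp1]


/-- E1 : sin(u*)^(p-2) ≤ B. -/
lemma E1 (hp1 : 1 < p) (hp2 : p ≤ 2) : Real.sin (π - π / p) ^ (p - 2) ≤ Bc p := by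
  have hπ := pi_pos
  have hp0 : (0:ℝ) < p := by linarith
  set t := π / (2 * p) with ht
  have hc := cos_t_pos hp1
  have hs := sin_t_pos hp1
  set s := Real.sin t
  set c := Real.cos t
  have h2t : π / p = 2 * t := by rw [ht]; field_simp
  have hsin : Real.sin (π - π / p) = 2 * s * c := by
    rw [Real.sin_pi_sub, h2t, Real.sin_two_mul]
  rw [hsin, Bc, ← ht, le_div_iff₀ hc]
  -- goal : (2 s c)^(p-2) * c ≤ s ^ (p-1)
  have hsc : (0:ℝ) < 2 * s * c := by positivity
  have sqrt2_pos : (0:ℝ) < √2 := by positivity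
  have h22 : √2 * √2 = 2 := Real.mul_self_sqrt (by norm_num)
  have hhalf : (√2 / 2 : ℝ) = (2:ℝ) ^ (-(1/2) : ℝ) := by
    rw [Real.rpow_neg (by norm_num), ← Real.sqrt_eq_rpow]
    field_simp
    exact Real.sq_sqrt (by norm_num)
  have key : c ^ (p - 1) ≤ (2:ℝ) ^ (2 - p) * s := by
    calc c ^ (p - 1) ≤ ((2:ℝ) ^ (-(1/2) : ℝ)) ^ (p - 1) := by
          rw [← hhalf]; exact Real.rpow_le_rpow hc.le (cos_t_le hp1 hp2) (by linarith)
      _ = (2:ℝ) ^ ((-(1/2)) * (p - 1)) := by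
          rw [← Real.rpow_mul (by norm_num)]
      _ ≤ (2:ℝ) ^ ((2 - p) + (-(1/2))) := by
          apply Real.rpow_le_rpow_of_exponent_le (by norm_num)
          linarith
      _ = (2:ℝ) ^ (2 - p) * (√2 / 2) := by
          rw [Real.rpow_add (by norm_num), hhalf]
      _ ≤ (2:ℝ) ^ (2 - p) * s := by
          apply mul_le_mul_of_nonneg_left (sin_t_ge hp1 hp2)
          exact (Real.rpow_pos_of_pos (by norm_num) _).le
  have e1 : (2*s*c)^(2-p) = 2^(2-p) * s^(2-p) * c^(2-p) := by
    rw [Real.mul_rpow (by positivity) hc.le, Real.mul_rpow (by norm_num) hs.le]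
  have e2 : s^(2-p) * s^(p-1) = s := by
    rw [← Real.rpow_add hs]; norm_num
  have e4 : c^(p-1) * c^(2-p) = c := by
    rw [← Real.rpow_add hc]; norm_num
  have e5 : (2*s*c)^(p-2) = ((2*s*c)^(2-p))⁻¹ := by
    rw [show p-2 = -(2-p) by ring, Real.rpow_neg hsc.le]
  rw [e5, inv_mul_le_iff₀ (Real.rpow_pos_of_pos hsc _)]
  calc c = c^(p-1) * c^(2-p) := e4.symm
    _ ≤ ((2:ℝ)^(2-p) * s) * c^(2-p) :=
        mul_le_mul_of_nonneg_right key (Real.rpow_nonneg hc.le _)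
    _ = 2^(2-p) * (s^(2-p) * s^(p-1)) * c^(2-p) := by rw [e2]
    _ = (2*s*c)^(2-p) * s^(p-1) := by rw [e1]; ring

lemma ratio2_le (hp1 : 1 < p) (hp2 : p ≤ 2) {u : ℝ} (hu : u ∈ Ioo 0 (π - π / p)) :
    Real.sin u ^ (p - 1) ≤ Bc p * Real.sin ((p - 1) * (π - u)) := by
  have hπ := pi_pos
  have hp0 : (0:ℝ) < p := by linarith
  have hust := ustar_le hp1 hp2
  have hustp := ustar_pos hp1
  have hup : π / p = π - (π - π / p) := by ring
  -- φ u ≤ φ u*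
  have h := ratio2 hp1 hp2 (mem_Ioc.2 ⟨hu.1, hu.2.le⟩)
    (mem_Ioc.2 ⟨hustp, le_refl _⟩) hu.2.le
  have h2 := Real.exp_le_exp.2 h
  -- identify both sides
  have hvstar : (p - 1) * (π - (π - π / p)) = π - π / p := by
    field_simp
    ring
  have hx2 : u < π := by linarith [hu.2]
  have hv0 : 0 < (p - 1) * (π - u) := by
    have : π / p ≤ π - u := by linarith [hu.2]
    have h3 : 0 < π / p := by positivity
    nlinarith
  have hv2 : (p - 1) * (π - u) < π := by nlinarith [hu.1]
  have hsu : 0 < Real.sin u := Real.sin_pos_of_pos_of_lt_pi hu.1 hx2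
  have hsv : 0 < Real.sin ((p - 1) * (π - u)) := Real.sin_pos_of_pos_of_lt_pi hv0 hv2
  have hsstar : 0 < Real.sin (π - π / p) := by
    apply Real.sin_pos_of_pos_of_lt_pi hustp; linarith
  have exp1 : Real.exp ((p - 1) * Real.log (Real.sin u)
      - Real.log (Real.sin ((p - 1) * (π - u))))
      = Real.sin u ^ (p - 1) / Real.sin ((p - 1) * (π - u)) := by
    rw [Real.exp_sub, Real.exp_log hsv, Real.rpow_def_of_pos hsu, mul_comm]
  have exp2 : Real.exp ((p - 1) * Real.log (Real.sin (π - π / p))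
      - Real.log (Real.sin ((p - 1) * (π - (π - π / p)))))
      = Real.sin (π - π / p) ^ (p - 2) := by
    rw [hvstar, Real.rpow_def_of_pos hsstar]
    congr 1
    ring
  rw [exp1, exp2] at h2
  have h3 : Real.sin u ^ (p - 1) / Real.sin ((p - 1) * (π - u)) ≤ Bc p :=
    le_trans h2 (E1 hp1 hp2)
  calc Real.sin u ^ (p - 1)
      = Real.sin u ^ (p - 1) / Real.sin ((p - 1) * (π - u)) * Real.sin ((p - 1) * (π - u)) :=
        (div_mul_cancel₀ _ hsv.ne').symm
    _ ≤ Bc p * Real.sin ((p - 1) * (π - u)) := mul_le_mul_of_nonneg_right h3 hsv.le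


lemma mul_cos_le_sin {s : ℝ} (hs : 0 ≤ s) (hs2 : s < π / 2) : s * Real.cos s ≤ Real.sin s := by
  rcases eq_or_lt_of_le hs with h | h
  · simp [← h]
  · have hc : 0 < Real.cos s := Real.cos_pos_of_mem_Ioo ⟨by linarith [pi_pos], hs2⟩
    have := Real.lt_tan h hs2
    rw [Real.tan_eq_sin_div_cos, lt_div_iff₀ hc] at this
    linarith

/-- tan(π/4 + s) ≥ 1 + 2 s for 0 ≤ s < π/4. -/
lemma tan_lower {w : ℝ} (hw1 : π / 4 ≤ w) (hw2 : w < π / 2) :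
    1 + 2 * (w - π / 4) ≤ Real.tan w := by
  have hπ := pi_pos
  obtain ⟨s, hsdef⟩ : ∃ s, s = w - π / 4 := ⟨_, rfl⟩
  have hs0 : 0 ≤ s := by linarith
  have hs2 : s < π / 4 := by linarith
  have hcw : 0 < Real.cos w := Real.cos_pos_of_mem_Ioo ⟨by linarith, hw2⟩
  rw [Real.tan_eq_sin_div_cos, le_div_iff₀ hcw]
  have hw : w = s + π / 4 := by linarith
  have h22 : √2 * √2 = 2 := Real.mul_self_sqrt (by norm_num)
  have hs2pos : (0:ℝ) < √2 := by positivity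
  have hsinw : Real.sin w = (√2 / 2) * (Real.sin s + Real.cos s) := by
    rw [hw, Real.sin_add, Real.sin_pi_div_four, Real.cos_pi_div_four]; ring
  have hcosw : Real.cos w = (√2 / 2) * (Real.cos s - Real.sin s) := by
    rw [hw, Real.cos_add, Real.sin_pi_div_four, Real.cos_pi_div_four]; ring
  rw [hsinw, hcosw]
  have key : s * Real.cos s ≤ Real.sin s := mul_cos_le_sin hs0 (by linarith)
  have hsins : 0 ≤ Real.sin s := Real.sin_nonneg_of_nonneg_of_le_pi hs0 (by linarith)
  have h : (1 + 2 * s) * (Real.cos s - Real.sin s) ≤ Real.sin s + Real.cos s := by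
    nlinarith [key, mul_nonneg hs0 hsins]
  have h2 := mul_le_mul_of_nonneg_left h (by positivity : (0:ℝ) ≤ √2 / 2)
  rw [← hsdef]
  nlinarith [h2]

/-- E2 core: cos(pπ) · cos(t)^(p-1) ≤ sin(t). -/
lemma E2 (hp1 : 1 < p) (hp2 : p ≤ 2) :
    Real.cos (p * π) * Real.cos (π / (2 * p)) ^ (p - 1) ≤ Real.sin (π / (2 * p)) := by
  have hπ := pi_pos
  have hp0 : (0:ℝ) < p := by linarith
  obtain ⟨t, ht⟩ : ∃ t, t = π / (2 * p) := ⟨_, rfl⟩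
  rw [← ht]
  have hc : 0 < Real.cos t := by rw [ht]; exact cos_t_pos hp1
  have hs : 0 < Real.sin t := by rw [ht]; exact sin_t_pos hp1
  have htlb : π / 4 ≤ t := by rw [ht]; exact t_lb hp1 hp2
  have htub : t < π / 2 := by rw [ht]; exact t_ub hp1
  have hcle : Real.cos t ≤ √2 / 2 := by rw [ht]; exact cos_t_le hp1 hp2
  have hsge : √2 / 2 ≤ Real.sin t := by rw [ht]; exact sin_t_ge hp1 hp2
  have hcp : (0:ℝ) < Real.cos t ^ (p - 1) := Real.rpow_pos_of_pos hc _
  rcases le_or_gt (Real.cos (p * π)) 0 with hneg | hposc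
  · calc Real.cos (p * π) * Real.cos t ^ (p - 1) ≤ 0 := mul_nonpos_of_nonpos_of_nonneg hneg hcp.le
      _ ≤ Real.sin t := hs.le
  have h22 : √2 * √2 = 2 := Real.mul_self_sqrt (by norm_num)
  have hsq2 : (1.4:ℝ) ≤ √2 := by
    rw [show (1.4:ℝ) = √(1.96) by
      rw [show (1.96:ℝ) = 1.4^2 by norm_num, Real.sqrt_sq]; norm_num]
    exact Real.sqrt_le_sqrt (by norm_num)
  have hpi_lb := Real.pi_gt_d6
  have hpi_ub := Real.pi_lt_d2
  rcases le_total p 1.74 with hcase | hcase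
  · -- q = 2 - p ≥ 0.26
    have hcos_eq : Real.cos (p * π) = Real.cos ((2 - p) * π) := by
      rw [show (p * π : ℝ) = 2 * π - (2 - p) * π by ring, Real.cos_two_pi_sub]
    have hq : Real.cos ((2 - p) * π) ≤ Real.cos (0.26 * π) := by
      apply Real.cos_le_cos_of_nonneg_of_le_pi (by positivity)
      · nlinarith [mul_nonneg (by linarith : (0:ℝ) ≤ p - 1) hπ.le]
      · nlinarith [mul_nonneg (by linarith : (0:ℝ) ≤ 2 - p - 0.26) hπ.le]
    have hnum : Real.cos (0.26 * π) ≤ 0.7 := by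
      have hb := Real.cos_bound (x := 0.26 * π) (by rw [abs_of_nonneg (by positivity)]; nlinarith)
      rw [abs_sub_le_iff, abs_of_nonneg (by positivity : (0:ℝ) ≤ 0.26 * π)] at hb
      have hlo : (0.8168:ℝ) ≤ 0.26 * π := by nlinarith
      have hhi : (0.26:ℝ) * π ≤ 0.819 := by nlinarith
      have hlo2 : (0.8168:ℝ)^2 ≤ (0.26 * π)^2 := by nlinarith
      have hhi2 : (0.26 * π)^2 ≤ (0.819:ℝ)^2 := by nlinarith
      have hhi4 : (0.26 * π)^4 ≤ (0.819:ℝ)^4 := by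
        have h := mul_self_le_mul_self (by positivity : (0:ℝ) ≤ (0.26*π)^2) hhi2
        calc (0.26*π)^4 = (0.26*π)^2 * (0.26*π)^2 := by ring
          _ ≤ (0.819:ℝ)^2 * (0.819:ℝ)^2 := h
          _ = (0.819:ℝ)^4 := by ring
      linarith [hb.1, hlo2, hhi4]
    have hsin : (0.7:ℝ) ≤ Real.sin t := by nlinarith [hsge]
    calc Real.cos (p * π) * Real.cos t ^ (p - 1)
        ≤ Real.cos (p * π) * 1 := by
          apply mul_le_mul_of_nonneg_left _ hposc.le
          exact Real.rpow_le_one hc.le (Real.cos_le_one t) (by linarith)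
      _ = Real.cos (p * π) := mul_one _
      _ ≤ 0.7 := by rw [hcos_eq]; linarith [hq, hnum]
      _ ≤ Real.sin t := hsin
  · -- p ≥ 1.74 : show cos t ^ (p-1) ≤ sin t suffices
    have htan : 1 + 2 * (t - π / 4) ≤ Real.tan t := tan_lower htlb htub
    -- t - π/4 ≥ π (2-p) / 8
    have htlb2 : π / 4 + π / 8 * (2 - p) ≤ t := by
      rw [ht, le_div_iff₀ (by linarith : (0:ℝ) < 2 * p)]
      nlinarith [sq_nonneg (p - 2)]
    have htan2 : 1 + π / 4 * (2 - p) ≤ Real.tan t := by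
      have : 1 + 2 * (π / 4 + π / 8 * (2 - p) - π / 4) ≤ 1 + 2 * (t - π / 4) := by nlinarith
      calc 1 + π / 4 * (2 - p) = 1 + 2 * (π / 4 + π / 8 * (2 - p) - π / 4) := by ring
        _ ≤ 1 + 2 * (t - π / 4) := this
        _ ≤ Real.tan t := htan
    have hx : π / 3.48 ≤ 0.90518 := by rw [div_le_iff₀ (by norm_num)]; nlinarith
    have hx0 : (0:ℝ) ≤ π / 3.48 := by positivity
    have hx2 : (π / 3.48)^2 ≤ 0.90518^2 := by nlinarith [hx, hx0]
    have hx4 : (π / 3.48)^4 ≤ 0.90518^4 := by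
      have h := mul_self_le_mul_self (by positivity : (0:ℝ) ≤ (π/3.48)^2) hx2
      calc (π/3.48)^4 = (π/3.48)^2 * (π/3.48)^2 := by ring
        _ ≤ (0.90518:ℝ)^2 * (0.90518:ℝ)^2 := h
        _ = (0.90518:ℝ)^4 := by ring
    have hct : (0.5553:ℝ) ≤ Real.cos t := by
      have h1 : t ≤ π / 3.48 := by
        rw [ht]
        rw [div_le_div_iff₀ (by linarith) (by norm_num)]
        nlinarith
      have h2 : Real.cos (π / 3.48) ≤ Real.cos t :=
        Real.cos_le_cos_of_nonneg_of_le_pi (by nlinarith)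
          (div_le_self hπ.le (by norm_num)) h1
      have hb := Real.cos_bound (x := π / 3.48) (by rw [abs_of_nonneg hx0]; linarith [hx])
      rw [abs_sub_le_iff, abs_of_nonneg hx0] at hb
      linarith [hb.2, h2, hx2, hx4]
    have he : (1.8122:ℝ) ≤ Real.exp 0.62 := by
      nlinarith [Real.quadratic_le_exp_of_nonneg (by norm_num : (0:ℝ) ≤ 0.62)]
    have hexp : Real.exp (-0.62) ≤ 0.5553 := by
      rw [Real.exp_neg]
      have h3 := inv_anti₀ (by norm_num : (0:ℝ) < 1.8122) he
      calc (Real.exp 0.62)⁻¹ ≤ (1.8122:ℝ)⁻¹ := h3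
        _ ≤ 0.5553 := by norm_num
    have hlog : (-0.62:ℝ) ≤ Real.log (Real.cos t) :=
      (Real.le_log_iff_exp_le hc).2 (le_trans hexp hct)
    have hcq : 1 - 0.62 * (2 - p) ≤ Real.cos t ^ (2 - p) := by
      rw [Real.rpow_def_of_pos hc]
      have hexp2 := Real.add_one_le_exp (Real.log (Real.cos t) * (2 - p))
      nlinarith [mul_le_mul_of_nonneg_right hlog (by linarith : (0:ℝ) ≤ 2 - p)]
    have hprod : 1 ≤ Real.tan t * Real.cos t ^ (2 - p) := by
      have h1 : (0:ℝ) ≤ 2 - p := by linarith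
      have h2 : (0:ℝ) ≤ 1 - 0.62 * (2 - p) := by nlinarith
      calc (1:ℝ) ≤ (1 + π / 4 * (2 - p)) * (1 - 0.62 * (2 - p)) := by
            nlinarith [mul_nonneg (mul_nonneg h1 (show (0:ℝ) ≤ 0.26 - (2-p) by linarith)) hπ.le,
              mul_nonneg h1 (show (0:ℝ) ≤ π - 3.141592 by linarith)]
        _ ≤ Real.tan t * Real.cos t ^ (2 - p) := by
            apply mul_le_mul htan2 hcq h2
            nlinarith
    have hfin : Real.cos t ^ (p - 1) ≤ Real.sin t := by
      have e0 : Real.cos t ^ (p - 2) * Real.cos t ^ (2 - p) = 1 := by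
        rw [← Real.rpow_add hc]; norm_num
      have h1 : Real.cos t ^ (p - 2) ≤ Real.tan t := by
        have h2 := mul_le_mul_of_nonneg_left hprod (Real.rpow_pos_of_pos hc (p - 2)).le
        rw [mul_one] at h2
        calc Real.cos t ^ (p - 2) ≤ Real.cos t ^ (p - 2) * (Real.tan t * Real.cos t ^ (2 - p)) := h2
          _ = Real.tan t * (Real.cos t ^ (p - 2) * Real.cos t ^ (2 - p)) := by ring
          _ = Real.tan t := by rw [e0, mul_one]
      have e1 : Real.cos t ^ (p - 1) = Real.cos t ^ (p - 2) * Real.cos t := by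
        rw [show p - 1 = (p - 2) + 1 by ring, Real.rpow_add_one hc.ne']
      rw [e1]
      calc Real.cos t ^ (p - 2) * Real.cos t ≤ Real.tan t * Real.cos t :=
            mul_le_mul_of_nonneg_right h1 hc.le
        _ = Real.sin t := by rw [Real.tan_eq_sin_div_cos, div_mul_cancel₀ _ hc.ne']
    calc Real.cos (p * π) * Real.cos t ^ (p - 1)
        ≤ 1 * Real.cos t ^ (p - 1) := mul_le_mul_of_nonneg_right (Real.cos_le_one _) hcp.le
      _ = Real.cos t ^ (p - 1) := one_mul _
      _ ≤ Real.sin t := hfin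


lemma rpow_cont (hp0 : 0 ≤ p) : Continuous fun z : ℝ => z ^ p :=
  continuous_iff_continuousAt.mpr fun z => Real.continuousAt_rpow_const z p (Or.inr hp0)

lemma regionI (hp1 : 1 < p) (hp2 : p ≤ 2) {y : ℝ} (hy : y ∈ Ico 0 (π / 2)) :
    Real.sin y ^ p + Bc p * Real.cos (p * y) ≤ Ac p * Real.cos y ^ p := by
  have hπ := pi_pos
  have hp0 : (0:ℝ) < p := by linarith
  set H : ℝ → ℝ := fun x => Real.tan x ^ p + Bc p * (Real.cos (p * x) / Real.cos x ^ p)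
    with hH
  have hd : ∀ x ∈ Ioo 0 (π / 2), HasDerivAt H
      (p * (Real.sin x ^ (p - 1) - Bc p * Real.sin ((p - 1) * x)) / Real.cos x ^ (p + 1)) x := by
    intro x hx
    have hc : 0 < Real.cos x := Real.cos_pos_of_mem_Ioo ⟨by linarith [hx.1], hx.2⟩
    have hs : 0 < Real.sin x := Real.sin_pos_of_pos_of_lt_pi hx.1 (by linarith [hx.2])
    have htanp : 0 < Real.tan x := by rw [Real.tan_eq_sin_div_cos]; positivity
    have hcp : (0:ℝ) < Real.cos x ^ p := Real.rpow_pos_of_pos hc p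
    have hb : (0:ℝ) < Real.cos x ^ (p - 1) := Real.rpow_pos_of_pos hc _
    have h1 : HasDerivAt (fun x => Real.tan x ^ p)
        (1 / Real.cos x ^ 2 * p * Real.tan x ^ (p - 1)) x :=
      (Real.hasDerivAt_tan hc.ne').rpow_const (Or.inl htanp.ne')
    have h2 : HasDerivAt (fun x : ℝ => Real.cos (p * x)) (-Real.sin (p * x) * p) x := by
      exact ((Real.hasDerivAt_cos (p * x)).comp x ((hasDerivAt_id x).const_mul p)).congr_deriv (by ring)
    have h3 : HasDerivAt (fun x => Real.cos x ^ p) (-Real.sin x * p * Real.cos x ^ (p - 1)) x :=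
      (Real.hasDerivAt_cos x).rpow_const (Or.inl hc.ne')
    have h4 := h2.div h3 hcp.ne'
    have h5 := h1.add (h4.const_mul (Bc p))
    refine h5.congr_deriv ?_
    have f1 : Real.tan x ^ (p - 1) = Real.sin x ^ (p - 1) / Real.cos x ^ (p - 1) := by
      rw [Real.tan_eq_sin_div_cos, Real.div_rpow hs.le hc.le]
    have f2 := Real.rpow_add_one hc.ne' (p - 1)
    rw [show p - 1 + 1 = p by ring] at f2
    have f3 := Real.rpow_add_one hc.ne' p
    have f5 : Real.sin ((p - 1) * x)
        = Real.sin (p * x) * Real.cos x - Real.cos (p * x) * Real.sin x := by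
      rw [show (p - 1) * x = p * x - x by ring, Real.sin_sub]
    rw [f5, f3, f2, f1]
    field_simp
    ring
  have hrp : Continuous fun z : ℝ => z ^ p := rpow_cont hp0.le
  have hcont : ContinuousOn H (Ico 0 (π / 2)) := by
    intro x hx
    have hc : 0 < Real.cos x := Real.cos_pos_of_mem_Ioo ⟨by linarith [hx.1], hx.2⟩
    have hcp : (0:ℝ) < Real.cos x ^ p := Real.rpow_pos_of_pos hc p
    have ctan : ContinuousAt Real.tan x := Real.continuousAt_tan.2 hc.ne'
    have c1 : ContinuousAt (fun x => Real.tan x ^ p) x :=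
      ContinuousAt.comp (g := fun z : ℝ => z ^ p) hrp.continuousAt ctan
    have c2 : ContinuousAt (fun x : ℝ => Real.cos (p * x)) x :=
      (Real.continuous_cos.comp (continuous_const.mul continuous_id)).continuousAt
    have c3 : ContinuousAt (fun x => Real.cos x ^ p) x :=
      ContinuousAt.comp (g := fun z : ℝ => z ^ p) hrp.continuousAt Real.continuous_cos.continuousAt
    exact ((c1.add ((continuousAt_const.mul (c2.div c3 hcp.ne')))).continuousWithinAt)
  have hIcc : Icc 0 (π / (2 * p)) ⊆ Ico 0 (π / 2) := fun z hz =>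
    ⟨hz.1, lt_of_le_of_lt hz.2 (t_ub hp1)⟩
  have hIco : Ico (π / (2 * p)) (π / 2) ⊆ Ico 0 (π / 2) := fun z hz =>
    ⟨le_trans (t_pos hp1).le hz.1, hz.2⟩
  have Hmono : MonotoneOn H (Icc 0 (π / (2 * p))) := by
    apply monotoneOn_of_deriv_nonneg (convex_Icc _ _) (hcont.mono hIcc)
    · rw [interior_Icc]
      intro x hx
      have hx' : x ∈ Ioo 0 (π / 2) := ⟨hx.1, lt_trans hx.2 (t_ub hp1)⟩
      exact ((hd x hx').differentiableAt).differentiableWithinAt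
    · rw [interior_Icc]
      intro x hx
      have hx' : x ∈ Ioo 0 (π / 2) := ⟨hx.1, lt_trans hx.2 (t_ub hp1)⟩
      rw [(hd x hx').deriv]
      apply div_nonneg _ (Real.rpow_pos_of_pos (Real.cos_pos_of_mem_Ioo
        ⟨by linarith [hx'.1], hx'.2⟩) _).le
      have := ratio1_le hp1 hp2 hx' hx.2.le
      nlinarith
  have Hanti : AntitoneOn H (Ico (π / (2 * p)) (π / 2)) := by
    apply antitoneOn_of_deriv_nonpos (convex_Ico _ _) (hcont.mono hIco)
    · rw [interior_Ico]
      intro x hx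
      have hx' : x ∈ Ioo 0 (π / 2) := ⟨lt_trans (t_pos hp1) hx.1, hx.2⟩
      exact ((hd x hx').differentiableAt).differentiableWithinAt
    · rw [interior_Ico]
      intro x hx
      have hx' : x ∈ Ioo 0 (π / 2) := ⟨lt_trans (t_pos hp1) hx.1, hx.2⟩
      rw [(hd x hx').deriv]
      apply div_nonpos_of_nonpos_of_nonneg _ (Real.rpow_pos_of_pos (Real.cos_pos_of_mem_Ioo
        ⟨by linarith [hx'.1], hx'.2⟩) _).le
      have := ratio1_ge hp1 hp2 hx' hx.1.le
      nlinarith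
  have hHt : H (π / (2 * p)) = Ac p := by
    have hpt : p * (π / (2 * p)) = π / 2 := by field_simp
    rw [hH]
    simp only [hpt, Real.cos_pi_div_two, zero_div, mul_zero, add_zero, Ac]
  have hHy : H y ≤ Ac p := by
    rcases le_total y (π / (2 * p)) with hle | hle
    · rw [← hHt]
      exact Hmono ⟨hy.1, hle⟩ ⟨(t_pos hp1).le, le_refl _⟩ hle
    · rw [← hHt]
      exact Hanti ⟨le_refl _, t_ub hp1⟩ ⟨hle, hy.2⟩ hle
  -- convert
  have hc : 0 < Real.cos y := Real.cos_pos_of_mem_Ioo ⟨by linarith [hy.1], hy.2⟩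
  have hs : 0 ≤ Real.sin y := Real.sin_nonneg_of_nonneg_of_le_pi hy.1 (by linarith [hy.2])
  have hcp : (0:ℝ) < Real.cos y ^ p := Real.rpow_pos_of_pos hc p
  have ftan : Real.tan y ^ p = Real.sin y ^ p / Real.cos y ^ p := by
    rw [Real.tan_eq_sin_div_cos, Real.div_rpow hs hc.le]
  have hHy2 : (Real.sin y ^ p + Bc p * Real.cos (p * y)) / Real.cos y ^ p ≤ Ac p := by
    rw [add_div, mul_div_assoc, ← ftan]
    exact hHy
  rw [div_le_iff₀ hcp] at hHy2
  linarith

lemma regionI_closed (hp1 : 1 < p) (hp2 : p ≤ 2) {y : ℝ} (hy : y ∈ Icc 0 (π / 2)) :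
    Real.sin y ^ p + Bc p * Real.cos (p * y) ≤ Ac p * Real.cos y ^ p := by
  have hπ := pi_pos
  have hp0 : (0:ℝ) < p := by linarith
  have hrp := rpow_cont hp0.le
  set G : ℝ → ℝ := fun y => Ac p * Real.cos y ^ p - Bc p * Real.cos (p * y) - Real.sin y ^ p
    with hG
  have hGc : Continuous G := by
    apply Continuous.sub
    · apply Continuous.sub
      · exact continuous_const.mul (hrp.comp Real.continuous_cos)
      · exact continuous_const.mul
          (Real.continuous_cos.comp (continuous_const.mul continuous_id))
    · exact hrp.comp Real.continuous_sin
  have hsub : Ico 0 (π / 2) ⊆ {y | 0 ≤ G y} := by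
    intro z hz
    have := regionI hp1 hp2 hz
    simp only [mem_setOf_eq, hG]
    linarith
  have hclos : Icc 0 (π / 2) ⊆ {y | 0 ≤ G y} := by
    rw [← closure_Ico (by positivity : (0:ℝ) ≠ π / 2)]
    exact closure_minimal hsub (isClosed_le continuous_const hGc)
  have := hclos hy
  simp only [mem_setOf_eq, hG] at this
  linarith

lemma regionIIa (hp1 : 1 < p) (hp2 : p ≤ 2) {y : ℝ} (hy : y ∈ Icc (π / 2) (π / p)) :
    Real.sin y ^ p + Bc p * Real.cos (p * y) ≤ Ac p * (-Real.cos y) ^ p := by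
  have hπ := pi_pos
  have hp0 : (0:ℝ) < p := by linarith
  have hp2' : π / p ≤ π := div_le_self hπ.le (by linarith)
  have hrp := rpow_cont hp0.le
  set g : ℝ → ℝ := fun y => Ac p * (-Real.cos y) ^ p - Bc p * Real.cos (p * y) - Real.sin y ^ p
    with hg
  have hgc : Continuous g := by
    apply Continuous.sub
    · apply Continuous.sub
      · exact continuous_const.mul (hrp.comp Real.continuous_cos.neg)
      · exact continuous_const.mul
          (Real.continuous_cos.comp (continuous_const.mul continuous_id))
    · exact hrp.comp Real.continuous_sin
  have hd : ∀ x ∈ Ioo (π / 2) (π / p), HasDerivAt g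
      (Ac p * (Real.sin x * p * (-Real.cos x) ^ (p - 1))
        - Bc p * (-Real.sin (p * x) * p) - Real.cos x * p * Real.sin x ^ (p - 1)) x := by
    intro x hx
    have hs : 0 < Real.sin x := Real.sin_pos_of_pos_of_lt_pi (by linarith [hx.1]) (by
      calc x < π / p := hx.2
        _ ≤ π := hp2')
    have hnc : 0 < -Real.cos x := by
      have : Real.cos x < 0 := Real.cos_neg_of_pi_div_two_lt_of_lt hx.1 (by nlinarith [hx.2])
      linarith
    have h1 : HasDerivAt (fun y : ℝ => -Real.cos y) (Real.sin x) x := by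
      exact (Real.hasDerivAt_cos x).neg.congr_deriv (by ring)
    have h1' : HasDerivAt (fun y : ℝ => (-Real.cos y) ^ p)
        (Real.sin x * p * (-Real.cos x) ^ (p - 1)) x :=
      h1.rpow_const (Or.inl hnc.ne')
    have h2 : HasDerivAt (fun x : ℝ => Real.cos (p * x)) (-Real.sin (p * x) * p) x := by
      exact ((Real.hasDerivAt_cos (p * x)).comp x ((hasDerivAt_id x).const_mul p)).congr_deriv (by ring)
    have h3 : HasDerivAt (fun x => Real.sin x ^ p) (Real.cos x * p * Real.sin x ^ (p - 1)) x :=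
      (Real.hasDerivAt_sin x).rpow_const (Or.inl hs.ne')
    exact ((h1'.const_mul (Ac p)).sub (h2.const_mul (Bc p))).sub h3
  have hmono : MonotoneOn g (Icc (π / 2) (π / p)) := by
    apply monotoneOn_of_deriv_nonneg (convex_Icc _ _) hgc.continuousOn
    · rw [interior_Icc]
      exact fun x hx => ((hd x hx).differentiableAt).differentiableWithinAt
    · rw [interior_Icc]
      intro x hx
      rw [(hd x hx).deriv]
      have hs : 0 < Real.sin x := Real.sin_pos_of_pos_of_lt_pi (by linarith [hx.1]) (by
        calc x < π / p := hx.2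
          _ ≤ π := hp2')
      have hnc : 0 < -Real.cos x := by
        have : Real.cos x < 0 := Real.cos_neg_of_pi_div_two_lt_of_lt hx.1 (by nlinarith [hx.2])
        linarith
      have hsp : 0 ≤ Real.sin (p * x) := by
        apply Real.sin_nonneg_of_nonneg_of_le_pi
        · nlinarith [hx.1]
        · have := hx.2
          rw [lt_div_iff₀ hp0] at this
          nlinarith
      have t1 : 0 ≤ Ac p * (Real.sin x * p * (-Real.cos x) ^ (p - 1)) := by
        have := (A_pos hp1).le
        have := (Real.rpow_pos_of_pos hnc (p - 1)).le
        positivity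
      have t2 : Bc p * (-Real.sin (p * x) * p) ≤ 0 := by
        apply mul_nonpos_of_nonneg_of_nonpos (B_pos hp1).le
        nlinarith
      have t3 : Real.cos x * p * Real.sin x ^ (p - 1) ≤ 0 := by
        apply mul_nonpos_of_nonpos_of_nonneg _ (Real.rpow_pos_of_pos hs (p - 1)).le
        nlinarith
      linarith
  have hg0 : 0 ≤ g (π / 2) := by
    have h := regionI_closed hp1 hp2 (y := π / 2) ⟨by linarith, le_refl _⟩
    simp only [hg, Real.cos_pi_div_two, neg_zero]
    simp only [Real.cos_pi_div_two] at h
    linarith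
  have hyle : 0 ≤ g y := le_trans hg0 (hmono ⟨le_refl _, by linarith [hy.1, hy.2]⟩ hy hy.1)
  simp only [hg] at hyle
  linarith

lemma regionIIb (hp1 : 1 < p) (hp2 : p ≤ 2) {u : ℝ} (hu : u ∈ Ico 0 (π - π / p)) :
    Real.sin u ^ p + Bc p * Real.cos (p * (π - u)) ≤ Ac p * Real.cos u ^ p := by
  have hπ := pi_pos
  have hp0 : (0:ℝ) < p := by linarith
  have hust := ustar_le hp1 hp2
  set H : ℝ → ℝ := fun x => Real.tan x ^ p + Bc p * (Real.cos (p * (π - x)) / Real.cos x ^ p)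
    with hH
  have hd : ∀ x ∈ Ioo 0 (π - π / p), HasDerivAt H
      (p * (Real.sin x ^ (p - 1) - Bc p * Real.sin ((p - 1) * (π - x)))
        / Real.cos x ^ (p + 1)) x := by
    intro x hx
    have hx2 : x < π / 2 := lt_of_lt_of_le hx.2 hust
    have hc : 0 < Real.cos x := Real.cos_pos_of_mem_Ioo ⟨by linarith [hx.1], hx2⟩
    have hs : 0 < Real.sin x := Real.sin_pos_of_pos_of_lt_pi hx.1 (by linarith)
    have htanp : 0 < Real.tan x := by rw [Real.tan_eq_sin_div_cos]; positivity
    have hcp : (0:ℝ) < Real.cos x ^ p := Real.rpow_pos_of_pos hc p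
    have h1 : HasDerivAt (fun x => Real.tan x ^ p)
        (1 / Real.cos x ^ 2 * p * Real.tan x ^ (p - 1)) x :=
      (Real.hasDerivAt_tan hc.ne').rpow_const (Or.inl htanp.ne')
    have h2 : HasDerivAt (fun x : ℝ => Real.cos (p * (π - x)))
        (Real.sin (p * (π - x)) * p) x := by
      have hinner : HasDerivAt (fun y : ℝ => p * (π - y)) (p * -1) x :=
        ((hasDerivAt_id x).const_sub π).const_mul p
      refine ((Real.hasDerivAt_cos (p * (π - x))).comp x hinner).congr_deriv ?_
      ring
    have h3 : HasDerivAt (fun x => Real.cos x ^ p) (-Real.sin x * p * Real.cos x ^ (p - 1)) x :=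
      (Real.hasDerivAt_cos x).rpow_const (Or.inl hc.ne')
    have h4 := h2.div h3 hcp.ne'
    have h5 := h1.add (h4.const_mul (Bc p))
    refine h5.congr_deriv ?_
    have f1 : Real.tan x ^ (p - 1) = Real.sin x ^ (p - 1) / Real.cos x ^ (p - 1) := by
      rw [Real.tan_eq_sin_div_cos, Real.div_rpow hs.le hc.le]
    have f2 := Real.rpow_add_one hc.ne' (p - 1)
    rw [show p - 1 + 1 = p by ring] at f2
    have f3 := Real.rpow_add_one hc.ne' p
    have f5 : Real.sin ((p - 1) * (π - x))
        = -(Real.sin (p * (π - x)) * Real.cos x + Real.cos (p * (π - x)) * Real.sin x) := by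
      rw [← Real.sin_add]
      rw [show p * (π - x) + x = π + (p - 1) * (π - x) by ring, Real.sin_add, Real.sin_pi,
        Real.cos_pi]
      ring
    rw [f5, f3, f2, f1]
    field_simp
    ring
  have hrp := rpow_cont hp0.le
  have hcont : ContinuousOn H (Ico 0 (π - π / p)) := by
    intro x hx
    have hx2 : x < π / 2 := lt_of_lt_of_le hx.2 hust
    have hc : 0 < Real.cos x := Real.cos_pos_of_mem_Ioo ⟨by linarith [hx.1], hx2⟩
    have hcp : (0:ℝ) < Real.cos x ^ p := Real.rpow_pos_of_pos hc p
    have ctan : ContinuousAt Real.tan x := Real.continuousAt_tan.2 hc.ne'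
    have c1 : ContinuousAt (fun x => Real.tan x ^ p) x :=
      ContinuousAt.comp (g := fun z : ℝ => z ^ p) hrp.continuousAt ctan
    have c2 : ContinuousAt (fun x : ℝ => Real.cos (p * (π - x))) x :=
      (Real.continuous_cos.comp
        (continuous_const.mul (continuous_const.sub continuous_id))).continuousAt
    have c3 : ContinuousAt (fun x => Real.cos x ^ p) x :=
      ContinuousAt.comp (g := fun z : ℝ => z ^ p) hrp.continuousAt Real.continuous_cos.continuousAt
    exact ((c1.add ((continuousAt_const.mul (c2.div c3 hcp.ne')))).continuousWithinAt)
  have hanti : AntitoneOn H (Ico 0 (π - π / p)) := by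
    apply antitoneOn_of_deriv_nonpos (convex_Ico _ _) hcont
    · rw [interior_Ico]
      exact fun x hx => ((hd x hx).differentiableAt).differentiableWithinAt
    · rw [interior_Ico]
      intro x hx
      rw [(hd x hx).deriv]
      have hx2 : x < π / 2 := lt_of_lt_of_le hx.2 hust
      have hc : 0 < Real.cos x := Real.cos_pos_of_mem_Ioo ⟨by linarith [hx.1], hx2⟩
      apply div_nonpos_of_nonpos_of_nonneg _ (Real.rpow_pos_of_pos hc _).le
      have := ratio2_le hp1 hp2 hx
      nlinarith
  have hH0 : H 0 = Bc p * Real.cos (p * π) := by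
    rw [hH]
    simp only [Real.tan_zero, Real.cos_zero, Real.rpow_one, sub_zero, mul_zero]
    rw [Real.zero_rpow hp0.ne', Real.one_rpow, div_one]
    simp
  have hBA : Bc p * Real.cos (p * π) ≤ Ac p := by
    have hc := cos_t_pos hp1
    have hs := sin_t_pos hp1
    have hcp : (0:ℝ) < Real.cos (π / (2 * p)) ^ p := Real.rpow_pos_of_pos hc p
    have hAc : Ac p = Real.sin (π / (2 * p)) ^ p / Real.cos (π / (2 * p)) ^ p := by
      rw [Ac, Real.tan_eq_sin_div_cos, Real.div_rpow hs.le hc.le]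
    rw [hAc, Bc, div_mul_eq_mul_div, div_le_div_iff₀ hc hcp]
    have f2 := Real.rpow_add_one hc.ne' (p - 1)
    rw [show p - 1 + 1 = p by ring] at f2
    have f2s := Real.rpow_add_one hs.ne' (p - 1)
    rw [show p - 1 + 1 = p by ring] at f2s
    have he2 := E2 hp1 hp2
    have hmul := mul_le_mul_of_nonneg_left he2
      (mul_nonneg (Real.rpow_pos_of_pos hs (p - 1)).le hc.le)
    calc Real.sin (π / (2 * p)) ^ (p - 1) * Real.cos (p * π) * Real.cos (π / (2 * p)) ^ p
        = Real.sin (π / (2 * p)) ^ (p - 1) * Real.cos (π / (2 * p))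
            * (Real.cos (p * π) * Real.cos (π / (2 * p)) ^ (p - 1)) := by rw [f2]; ring
      _ ≤ Real.sin (π / (2 * p)) ^ (p - 1) * Real.cos (π / (2 * p))
            * Real.sin (π / (2 * p)) := hmul
      _ = Real.sin (π / (2 * p)) ^ p * Real.cos (π / (2 * p)) := by rw [f2s]; ring
  have hHu : H u ≤ Ac p := by
    calc H u ≤ H 0 := hanti ⟨le_refl _, ustar_pos hp1⟩ hu hu.1
      _ = Bc p * Real.cos (p * π) := hH0
      _ ≤ Ac p := hBA
  -- convert
  have hx2 : u < π / 2 := lt_of_lt_of_le hu.2 hust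
  have hc : 0 < Real.cos u := Real.cos_pos_of_mem_Ioo ⟨by linarith [hu.1], hx2⟩
  have hs : 0 ≤ Real.sin u := Real.sin_nonneg_of_nonneg_of_le_pi hu.1 (by linarith)
  have hcp : (0:ℝ) < Real.cos u ^ p := Real.rpow_pos_of_pos hc p
  have ftan : Real.tan u ^ p = Real.sin u ^ p / Real.cos u ^ p := by
    rw [Real.tan_eq_sin_div_cos, Real.div_rpow hs hc.le]
  have hHy2 : (Real.sin u ^ p + Bc p * Real.cos (p * (π - u))) / Real.cos u ^ p ≤ Ac p := by
    rw [add_div, mul_div_assoc, ← ftan]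
    exact hHu
  rw [div_le_iff₀ hcp] at hHy2
  linarith

lemma main_ineq (hp1 : 1 < p) (hp2 : p ≤ 2) {y : ℝ} (hy : y ∈ Icc 0 π) :
    Real.sin y ^ p + Bc p * Real.cos (p * y) ≤ Ac p * |Real.cos y| ^ p := by
  have hπ := pi_pos
  have hp0 : (0:ℝ) < p := by linarith
  rcases le_or_gt y (π / 2) with h | h
  · have habs : |Real.cos y| = Real.cos y :=
      abs_of_nonneg (Real.cos_nonneg_of_mem_Icc ⟨by linarith [hy.1], h⟩)
    rw [habs]
    exact regionI_closed hp1 hp2 ⟨hy.1, h⟩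
  · have hcos : Real.cos y ≤ 0 :=
      Real.cos_nonpos_of_pi_div_two_le_of_le h.le (by linarith [hy.2])
    have habs : |Real.cos y| = -Real.cos y := abs_of_nonpos hcos
    rw [habs]
    rcases le_or_gt y (π / p) with h2 | h2
    · exact regionIIa hp1 hp2 ⟨h.le, h2⟩
    · have hu : π - y ∈ Ico 0 (π - π / p) := ⟨by linarith [hy.2], by linarith⟩
      have := regionIIb hp1 hp2 hu
      rw [Real.sin_pi_sub, Real.cos_pi_sub, show π - (π - y) = y by ring] at this
      exact this

end Pichor

open Real

/-- Pichorides' trigonometric inequality, extended to `|x| ≤ π`. -/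
theorem pichorides_inequality (p : ℝ) (hp1 : 1 < p) (hp2 : p ≤ 2)
    (x : ℝ) (hx : |x| ≤ π) :
    |Real.sin x| ^ p ≤
      (Real.tan (π / (2 * p)) ^ (p - 1) / Real.cot (π / (2 * p))) * |Real.cos x| ^ p
        - (Real.sin (π / (2 * p)) ^ (p - 1) / Real.cos (π / (2 * p))) * Real.cos (p * x) := by
  have hπ := Real.pi_pos
  have hp0 : (0:ℝ) < p := by linarith
  have hy : |x| ∈ Set.Icc 0 π := ⟨abs_nonneg x, hx⟩
  have h1 : |Real.sin x| = Real.sin |x| := by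
    rcases abs_cases x with ⟨hax, hx0⟩ | ⟨hax, hx0⟩
    · rw [hax]
      exact abs_of_nonneg (Real.sin_nonneg_of_nonneg_of_le_pi hx0 (by rw [← hax]; exact hx))
    · rw [hax, Real.sin_neg]
      have hs : 0 ≤ Real.sin (-x) := by
        apply Real.sin_nonneg_of_nonneg_of_le_pi (by linarith)
        rw [← hax]; exact hx
      rw [Real.sin_neg] at hs
      rw [abs_of_nonpos (by linarith)]
  have h2 : |Real.cos (|x|)| = |Real.cos x| := by rw [Real.cos_abs]
  have h3 : Real.cos (p * |x|) = Real.cos (p * x) := by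
    rw [show p * |x| = |p * x| by rw [abs_mul, abs_of_nonneg hp0.le], Real.cos_abs]
  have hmain := Pichor.main_ineq hp1 hp2 hy
  rw [h3, h2] at hmain
  have hA : (Real.tan (π / (2 * p)) ^ (p - 1) / Real.cot (π / (2 * p))) = Pichor.Ac p := by
    have htan := Pichor.tan_t_pos hp1
    rw [Real.cot_eq_cos_div_sin, div_div_eq_mul_div, mul_div_assoc,
      ← Real.tan_eq_sin_div_cos, Pichor.Ac, ← Real.rpow_add_one htan.ne' (p - 1)]
    norm_num
  rw [h1, hA]
  show Real.sin |x| ^ p ≤ Pichor.Ac p * |Real.cos x| ^ p - Pichor.Bc p * Real.cos (p * x)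
  linarith
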